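/- arXiv:1407.7165 — 2 statements merged into one kernel-verified Lean document; each statement's English description precedes it below -/
import Mathlib

section
/- Let (X_n, Z_n), n = 1, 2, ..., be a sequence of pairs of real-valued random variables, where each X_n has support equal to a finite set 𝒳_n with 2 ≤ |𝒳_n| ≤ K for a constant K independent of n, and each Z_n has finite positive variance. Define Z̆_n = Z_n · V[Z_n]^{-1/2}, let m_n(x) = E[Z̆_n | X_n = x], and let ℳ_n = { m_n(x) : x ∈ 𝒳_n } ⊂ ℝ. Let ε*_n be one half of the minimum distance between any two distinct points of ℳ_n and ε* = inf_n ε*_n. Suppose: (1) ν(Z_n | X_n) → 0 as n → ∞; (2) each m_n is a one-to-one mapping from 𝒳_n into ℝ; and (3) ε* > 0. Then H(X_n | Z_n) → 0 as n → ∞, and consequently H(X_n) − I(X_n ; Z_n) → 0 as n → ∞. -/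
open MeasureTheory ProbabilityTheory Real Filter

/-- Conditional mean `E[Z | σ(X)]`. -/
noncomputable def condMean {Ω β : Type*} [MeasurableSpace Ω] [MeasurableSpace β]
    (μ : Measure Ω) (Z : Ω → ℝ) (X : Ω → β) : Ω → ℝ :=
  μ[Z | MeasurableSpace.comap X inferInstance]

/-- `ν(Z|X) = E{V[Z|X]}/V[Z] = E[(Z − E[Z|X])²] / V[Z]`. -/
noncomputable def nuScalar {Ω β : Type*} [MeasurableSpace Ω] [MeasurableSpace β]
    (μ : Measure Ω) (Z : Ω → ℝ) (X : Ω → β) : ℝ :=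
  (∫ ω, (Z ω - condMean μ Z X ω) ^ 2 ∂μ) / variance Z μ

/-- Discrete (Shannon) entropy of `X`, whose support is the finite set `S`. -/
noncomputable def finEntropy {Ω : Type*} [MeasurableSpace Ω] (μ : Measure Ω)
    (X : Ω → ℝ) (S : Finset ℝ) : ℝ :=
  ∑ x ∈ S, Real.negMulLog (μ (X ⁻¹' {x})).toReal

/-- Conditional entropy `H(X|Z)` of the finitely supported `X` given the real-valued `Z`,
defined via the regular conditional distribution of `X` given `Z`. -/
noncomputable def finCondEntropy {Ω : Type*} [MeasurableSpace Ω] (μ : Measure Ω)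
    [IsFiniteMeasure μ] (X Z : Ω → ℝ) (S : Finset ℝ) : ℝ :=
  ∫ z, ∑ x ∈ S, Real.negMulLog ((condDistrib X Z μ z) {x}).toReal ∂(Measure.map Z μ)

/-- Mutual information `I(X;Z) = H(X) − H(X|Z)` for finitely supported `X`. -/
noncomputable def finMutualInfo {Ω : Type*} [MeasurableSpace Ω] (μ : Measure Ω)
    [IsFiniteMeasure μ] (X Z : Ω → ℝ) (S : Finset ℝ) : ℝ :=
  finEntropy μ X S - finCondEntropy μ X Z S

lemma aux_negMulLog_le_two_sqrt {p : ℝ} (hp : 0 ≤ p) : Real.negMulLog p ≤ 2 * Real.sqrt p := by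
  rcases eq_or_lt_of_le hp with h | h
  · simp [← h, Real.negMulLog]
  · have hs : 0 < Real.sqrt p := Real.sqrt_pos.2 h
    have hlog : Real.log (1 / Real.sqrt p) ≤ 1 / Real.sqrt p - 1 :=
      Real.log_le_sub_one_of_pos (by positivity)
    have h1 : Real.log (1 / Real.sqrt p) = - (Real.log p / 2) := by
      rw [Real.log_div one_ne_zero hs.ne', Real.log_one, Real.log_sqrt hp]
      ring
    have hsq : Real.sqrt p * Real.sqrt p = p := Real.mul_self_sqrt hp
    have hdiv : p / Real.sqrt p = Real.sqrt p := by
      rw [div_eq_iff hs.ne']; exact hsq.symm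
    have key : -Real.log p ≤ 2 / Real.sqrt p - 2 := by
      rw [h1] at hlog
      have h2 : 2 * (1 / Real.sqrt p) = 2 / Real.sqrt p := by ring
      linarith
    calc Real.negMulLog p = p * (-Real.log p) := by rw [Real.negMulLog]; ring
    _ ≤ p * (2 / Real.sqrt p - 2) := mul_le_mul_of_nonneg_left key hp
    _ = 2 * (p / Real.sqrt p) - 2 * p := by ring
    _ = 2 * Real.sqrt p - 2 * p := by rw [hdiv]
    _ ≤ 2 * Real.sqrt p := by linarith

lemma aux_negMulLog_le_one_sub {p : ℝ} (hp : 0 ≤ p) :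
    Real.negMulLog p ≤ 1 - p := by
  rcases eq_or_lt_of_le hp with h | h
  · simp [← h, Real.negMulLog]
  · have hlog : Real.log (1 / p) ≤ 1 / p - 1 := Real.log_le_sub_one_of_pos (by positivity)
    have h1 : Real.log (1 / p) = - Real.log p := by
      rw [Real.log_div one_ne_zero h.ne', Real.log_one]; ring
    have key : -Real.log p ≤ 1 / p - 1 := by rw [h1] at hlog; linarith
    calc Real.negMulLog p = p * (-Real.log p) := by rw [Real.negMulLog]; ring
    _ ≤ p * (1 / p - 1) := mul_le_mul_of_nonneg_left key hp
    _ = 1 - p := by field_simp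

set_option maxHeartbeats 1000000 in
/-- Theorem 1 of the paper. If `ν(Zₙ|Xₙ) → 0`, the conditional mean
functions `mₙ(x) = E[Z̆ₙ | Xₙ = x]` of the standardized outputs `Z̆ₙ = Zₙ · V[Zₙ]^{-1/2}`
are one-to-one on the finite supports `𝒳ₙ`, and the points of the supports
`ℳₙ = mₙ(𝒳ₙ)` are uniformly separated (`ε* > 0`), then `H(Xₙ|Zₙ) → 0` and hence
`H(Xₙ) − I(Xₙ;Zₙ) → 0`. -/
theorem stmt_0
    {Ω : Type*} [MeasurableSpace Ω] (μ : Measure Ω) [IsProbabilityMeasure μ]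
    (X Z : ℕ → Ω → ℝ) (S : ℕ → Finset ℝ) (K : ℕ)
    (m : ℕ → ℝ → ℝ)
    (hXmeas : ∀ n, Measurable (X n)) (hZmeas : ∀ n, Measurable (Z n))
    -- the support of `Xₙ` is the finite set `𝒳ₙ = S n`, with `2 ≤ |𝒳ₙ| ≤ K`
    (hcard : ∀ n, 2 ≤ (S n).card) (hK : ∀ n, (S n).card ≤ K)
    (hsupp : ∀ n, μ (X n ⁻¹' ↑(S n)) = 1)
    (hatom : ∀ n, ∀ x ∈ S n, μ (X n ⁻¹' {x}) ≠ 0)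
    -- `Zₙ` has finite positive variance
    (hZL2 : ∀ n, MemLp (Z n) 2 μ) (hZvar : ∀ n, 0 < variance (Z n) μ)
    -- `mₙ(x) = E[Z̆ₙ | Xₙ = x]` where `Z̆ₙ = Zₙ · V[Zₙ]^{-1/2}`:
    -- `mₙ ∘ Xₙ` is a version of the conditional expectation of `Z̆ₙ` given `σ(Xₙ)`
    (hm : ∀ n, (fun ω => m n (X n ω)) =ᵐ[μ]
      condMean μ (fun ω => Z n ω / Real.sqrt (variance (Z n) μ)) (X n))
    -- condition (1): `ν(Zₙ|Xₙ) → 0`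
    (hnu : Tendsto (fun n => nuScalar μ (Z n) (X n)) atTop (nhds 0))
    -- condition (2): each `mₙ` is one-to-one on `𝒳ₙ`
    (hinj : ∀ n, Set.InjOn (m n) ↑(S n))
    -- condition (3): `ε* = inf_n ε*ₙ > 0`, i.e. any two distinct points of
    -- `ℳₙ = mₙ(𝒳ₙ)` are separated by at least `2 ε*`
    (hsep : ∃ ε : ℝ, 0 < ε ∧ ∀ n, ∀ x ∈ S n, ∀ y ∈ S n, x ≠ y →
      2 * ε ≤ |m n x - m n y|) :
    Tendsto (fun n => finCondEntropy μ (X n) (Z n) (S n)) atTop (nhds 0) ∧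
    Tendsto (fun n => finEntropy μ (X n) (S n) - finMutualInfo μ (X n) (Z n) (S n))
      atTop (nhds 0) := by
  obtain ⟨ε, hε, hsep⟩ := hsep
  -- the decoder
  set xhat : ℕ → ℝ → ℝ := fun n z =>
    ∑ x ∈ S n, if |z / Real.sqrt (variance (Z n) μ) - m n x| < ε then x else 0 with hxhat_def
  have hxhat_meas : ∀ n, Measurable (xhat n) := by
    intro n
    apply Finset.measurable_sum
    intro x _
    exact Measurable.ite
      (measurableSet_lt (((measurable_id.div_const _).sub_const _).abs) measurable_const)
      measurable_const measurable_const
  -- the decoder decodes correctly near the point masses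
  have hdec : ∀ n z x, x ∈ S n →
      |z / Real.sqrt (variance (Z n) μ) - m n x| < ε → xhat n z = x := by
    intro n z x hx hclose
    simp only [hxhat_def]
    rw [Finset.sum_eq_single_of_mem x hx]
    · rw [if_pos hclose]
    · intro y hy hyx
      rw [if_neg]
      intro hy_close
      have h2e := hsep n x hx y hy (Ne.symm hyx)
      have : |m n x - m n y| < 2 * ε := by
        have := abs_sub_abs_le_abs_sub (z / Real.sqrt (variance (Z n) μ) - m n x)
          (z / Real.sqrt (variance (Z n) μ) - m n y)
        calc |m n x - m n y|
            = |(z / Real.sqrt (variance (Z n) μ) - m n y)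
              - (z / Real.sqrt (variance (Z n) μ) - m n x)| := by ring_nf
          _ ≤ |z / Real.sqrt (variance (Z n) μ) - m n y|
              + |z / Real.sqrt (variance (Z n) μ) - m n x| := abs_sub _ _
          _ < 2 * ε := by linarith
      linarith
  -- the error probability
  set q : ℕ → ℝ := fun n => (μ {ω | X n ω ≠ xhat n (Z n ω)}).toReal with hq_def
  have hq_nonneg : ∀ n, 0 ≤ q n := fun n => ENNReal.toReal_nonneg
  have hXS_ae : ∀ n, ∀ᵐ ω ∂μ, X n ω ∈ S n := by
    intro n
    have hmeasS : MeasurableSet (X n ⁻¹' ↑(S n)) := (hXmeas n) (S n).measurableSet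
    have h0 := prob_compl_eq_one_sub (μ := μ) hmeasS
    rw [hsupp n, tsub_self] at h0
    rw [ae_iff]
    simpa [Set.preimage, Set.compl_def] using h0
  have hq_le : ∀ n, q n ≤ nuScalar μ (Z n) (X n) / ε ^ 2 := by
    intro n
    have hv : 0 < variance (Z n) μ := hZvar n
    set v : ℝ := variance (Z n) μ with hv_def
    have hsv : 0 < Real.sqrt v := Real.sqrt_pos.2 hv
    set Zt : Ω → ℝ := fun ω => Z n ω / Real.sqrt v with hZt_def
    set cM : Ω → ℝ := condMean μ Zt (X n) with hcM_def
    set W : Ω → ℝ := fun ω => Zt ω - cM ω with hW_def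
    have hle : MeasurableSpace.comap (X n) inferInstance ≤ _ := (hXmeas n).comap_le
    have hcM_sm : StronglyMeasurable cM := by
      rw [hcM_def, condMean]
      exact stronglyMeasurable_condExp.mono hle
    have hW_meas : Measurable W := ((hZmeas n).div_const _).sub hcM_sm.measurable
    have hm_ae : (fun ω => m n (X n ω)) =ᵐ[μ] cM := hm n
    -- integrability of W^2
    have hSne : (S n).Nonempty := Finset.card_pos.mp (by linarith [hcard n])
    set C : ℝ := (S n).sup' hSne (fun x => |m n x|) with hC_def
    have hcM2 : MemLp cM 2 μ := by
      refine MemLp.of_bound hcM_sm.aestronglyMeasurable C ?_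
      filter_upwards [hXS_ae n, hm_ae] with ω hS hmeq
      rw [← hmeq, Real.norm_eq_abs]
      exact Finset.le_sup' (fun x => |m n x|) hS
    have hZt2 : MemLp Zt 2 μ := by
      have h := (hZL2 n).const_mul (Real.sqrt v)⁻¹
      have : Zt = fun ω => (Real.sqrt v)⁻¹ * Z n ω := by
        funext ω; rw [hZt_def]; simp [div_eq_inv_mul]
      rw [this]; exact h
    have hW2 : MemLp W 2 μ := hZt2.sub hcM2
    have hWsq_int : Integrable (fun ω => W ω ^ 2) μ := hW2.integrable_sq
    -- identify ∫ W² with nuScalar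
    have hW_eq : W =ᵐ[μ] fun ω => (Z n ω - condMean μ (Z n) (X n) ω) / Real.sqrt v := by
      have hZt_smul : Zt = (Real.sqrt v)⁻¹ • (Z n) := by
        funext ω
        simp [hZt_def, div_eq_inv_mul]
      have hsmul := condExp_smul (μ := μ) (m := MeasurableSpace.comap (X n) inferInstance)
        ((Real.sqrt v)⁻¹) (Z n)
      have hcMae : cM =ᵐ[μ] (Real.sqrt v)⁻¹ • condMean μ (Z n) (X n) := by
        rw [hcM_def, condMean, hZt_smul]
        exact hsmul
      filter_upwards [hcMae] with ω hω
      simp only [hW_def, hZt_def, hω, Pi.smul_apply, smul_eq_mul]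
      ring
    have hWsq_eq : ∫ ω, W ω ^ 2 ∂μ = nuScalar μ (Z n) (X n) := by
      rw [integral_congr_ae (hW_eq.mono fun ω hω => by rw [hω])]
      simp_rw [div_pow, Real.sq_sqrt hv.le]
      rw [integral_div]
      rfl
    -- Chebyshev
    set A : Set Ω := {ω | ε ≤ |W ω|} with hA_def
    have hA : MeasurableSet A := measurableSet_le measurable_const hW_meas.abs
    have hcheb : (μ A).toReal * ε ^ 2 ≤ ∫ ω, W ω ^ 2 ∂μ := by
      calc (μ A).toReal * ε ^ 2 = ∫ _ω in A, ε ^ 2 ∂μ := by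
            rw [setIntegral_const, smul_eq_mul]; rfl
        _ ≤ ∫ ω in A, W ω ^ 2 ∂μ := by
            refine setIntegral_mono_on (integrableOn_const (measure_ne_top μ A))
              hWsq_int.integrableOn hA (fun ω hω => ?_)
            have hωA : ε ≤ |W ω| := hω
            calc ε ^ 2 ≤ |W ω| ^ 2 := by nlinarith [abs_nonneg (W ω)]
              _ = W ω ^ 2 := sq_abs _
        _ ≤ ∫ ω, W ω ^ 2 ∂μ := setIntegral_le_integral hWsq_int
            (Eventually.of_forall fun ω => sq_nonneg _)
    -- error event inclusion
    have hsub_ae : ∀ᵐ ω ∂μ, ω ∈ {ω | X n ω ≠ xhat n (Z n ω)} → ω ∈ A := by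
      filter_upwards [hXS_ae n, hm_ae] with ω hS hmeq hne
      by_contra hnA
      have hlt : |W ω| < ε := lt_of_not_ge hnA
      have hclose : |Z n ω / Real.sqrt v - m n (X n ω)| < ε := by
        have : Z n ω / Real.sqrt v - m n (X n ω) = W ω := by
          simp only [hW_def, hZt_def, hmeq]
        rw [this]; exact hlt
      exact hne (hdec n (Z n ω) (X n ω) hS hclose).symm
    have hmono : μ {ω | X n ω ≠ xhat n (Z n ω)} ≤ μ A := measure_mono_ae hsub_ae
    have h1 : q n ≤ (μ A).toReal := ENNReal.toReal_mono (measure_ne_top μ A) hmono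
    have h2 : (μ A).toReal ≤ nuScalar μ (Z n) (X n) / ε ^ 2 := by
      rw [le_div_iff₀ (by positivity : (0:ℝ) < ε ^ 2)]
      rw [← hWsq_eq]
      exact hcheb
    exact h1.trans h2
  have hq_tendsto : Tendsto q atTop (nhds 0) := by
    have h1 : Tendsto (fun n => nuScalar μ (Z n) (X n) / ε ^ 2) atTop (nhds 0) := by
      simpa using hnu.div_const (ε ^ 2)
    exact squeeze_zero hq_nonneg hq_le h1
  -- entropy bounds
  have hp01 : ∀ n (z x : ℝ), ((condDistrib (X n) (Z n) μ) z {x}).toReal ≤ 1 := by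
    intro n z x
    have h := prob_le_one (μ := (condDistrib (X n) (Z n) μ) z) (s := {x})
    simpa using ENNReal.toReal_mono ENNReal.one_ne_top h
  have hent_nonneg : ∀ n, 0 ≤ finCondEntropy μ (X n) (Z n) (S n) := by
    intro n
    unfold finCondEntropy
    refine integral_nonneg fun z => ?_
    refine Finset.sum_nonneg fun x _ => ?_
    exact Real.negMulLog_nonneg ENNReal.toReal_nonneg (hp01 n z x)
  have hent_le : ∀ n, ∀ δ : ℝ, 0 < δ →
      finCondEntropy μ (X n) (Z n) (S n) ≤ q n * (1 + (K : ℝ) / δ) + (K : ℝ) * δ := by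
    intro n δ hδ
    haveI : IsProbabilityMeasure (μ.map (Z n)) :=
      Measure.isProbabilityMeasure_map (hZmeas n).aemeasurable
    haveI : IsProbabilityMeasure (μ.map (fun ω => (Z n ω, X n ω))) :=
      Measure.isProbabilityMeasure_map ((hZmeas n).prodMk (hXmeas n)).aemeasurable
    have ht : MeasurableSet {p : ℝ × ℝ | p.2 = xhat n p.1} :=
      measurableSet_eq_fun measurable_snd ((hxhat_meas n).comp measurable_fst)
    have hpre : ∀ z : ℝ, Prod.mk z ⁻¹' {p : ℝ × ℝ | p.2 = xhat n p.1} = {xhat n z} := by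
      intro z; ext x
      simp [Set.mem_preimage, Set.mem_singleton_iff]
    have hκmeas : Measurable fun z => (condDistrib (X n) (Z n) μ) z {xhat n z} := by
      have h := Kernel.measurable_kernel_prodMk_left
        (κ := condDistrib (X n) (Z n) μ) ht
      simpa only [hpre] using h
    -- the compProd identity
    have hcd : μ.map (fun ω => (Z n ω, X n ω))
        = (μ.map (Z n)) ⊗ₘ condDistrib (X n) (Z n) μ := by
      have hdis := Measure.disintegrate (μ.map (fun ω => (Z n ω, X n ω))) (μ.map (fun ω => (Z n ω, X n ω))).condKernel
      rw [Measure.fst_map_prodMk (hXmeas n)] at hdis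
      rw [condDistrib_def]
      exact hdis.symm
    have h1 : ∫⁻ z, (condDistrib (X n) (Z n) μ) z {xhat n z} ∂(μ.map (Z n))
        = μ {ω | X n ω = xhat n (Z n ω)} := by
      have hL : μ.map (fun ω => (Z n ω, X n ω)) {p : ℝ × ℝ | p.2 = xhat n p.1}
          = ∫⁻ z, (condDistrib (X n) (Z n) μ) z {xhat n z} ∂(μ.map (Z n)) := by
        rw [hcd, Measure.compProd_apply ht]
        simp_rw [hpre]
      have hR : μ.map (fun ω => (Z n ω, X n ω)) {p : ℝ × ℝ | p.2 = xhat n p.1}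
          = μ {ω | X n ω = xhat n (Z n ω)} := by
        rw [Measure.map_apply ((hZmeas n).prodMk (hXmeas n)) ht]
        rfl
      rw [← hL, hR]
    have hκ_int : Integrable (fun z => ((condDistrib (X n) (Z n) μ) z {xhat n z}).toReal)
        (μ.map (Z n)) := by
      refine Integrable.mono' (integrable_const 1) hκmeas.ennreal_toReal.aestronglyMeasurable
        (Eventually.of_forall fun z => ?_)
      rw [Real.norm_eq_abs, abs_of_nonneg ENNReal.toReal_nonneg]
      have h := prob_le_one (μ := (condDistrib (X n) (Z n) μ) z) (s := {xhat n z})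
      simpa using ENNReal.toReal_mono ENNReal.one_ne_top h
    have h2 : ∫ z, ((condDistrib (X n) (Z n) μ) z {xhat n z}).toReal ∂(μ.map (Z n))
        = (μ {ω | X n ω = xhat n (Z n ω)}).toReal := by
      rw [integral_toReal hκmeas.aemeasurable
        (Eventually.of_forall fun z => measure_lt_top _ _), h1]
    have hset_meas : MeasurableSet {ω | X n ω = xhat n (Z n ω)} :=
      measurableSet_eq_fun (hXmeas n) ((hxhat_meas n).comp (hZmeas n))
    have h3 : ∫ z, (1 - ((condDistrib (X n) (Z n) μ) z {xhat n z}).toReal) ∂(μ.map (Z n))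
        = q n := by
      rw [integral_sub (integrable_const 1) hκ_int, h2]
      simp only [integral_const, measureReal_def, measure_univ, ENNReal.toReal_one, smul_eq_mul, one_mul, mul_one]
      have hcompl : {ω | X n ω ≠ xhat n (Z n ω)} = {ω | X n ω = xhat n (Z n ω)}ᶜ := rfl
      rw [hq_def]
      simp only [hcompl]
      rw [prob_compl_eq_one_sub hset_meas,
        ENNReal.toReal_sub_of_le (prob_le_one) ENNReal.one_ne_top, ENNReal.toReal_one]
    -- pointwise entropy bound
    have hg01 : ∀ z : ℝ, 0 ≤ 1 - ((condDistrib (X n) (Z n) μ) z {xhat n z}).toReal ∧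
        1 - ((condDistrib (X n) (Z n) μ) z {xhat n z}).toReal ≤ 1 := by
      intro z
      constructor
      · linarith [hp01 n z (xhat n z)]
      · linarith [ENNReal.toReal_nonneg
          (a := (condDistrib (X n) (Z n) μ) z {xhat n z})]
    have hHg : ∀ z : ℝ,
        ∑ x ∈ S n, Real.negMulLog (((condDistrib (X n) (Z n) μ) z {x}).toReal)
        ≤ (1 - ((condDistrib (X n) (Z n) μ) z {xhat n z}).toReal)
          + (K : ℝ) * (2 * Real.sqrt (1 - ((condDistrib (X n) (Z n) μ) z {xhat n z}).toReal)) := by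
      intro z
      set e : ℝ := 1 - ((condDistrib (X n) (Z n) μ) z {xhat n z}).toReal with he_def
      obtain ⟨he0, he1⟩ := hg01 z
      have hterm : ∀ x ∈ S n,
          Real.negMulLog (((condDistrib (X n) (Z n) μ) z {x}).toReal)
          ≤ (if x = xhat n z then e else 0) + 2 * Real.sqrt e := by
        intro x _
        by_cases hxe : x = xhat n z
        · rw [if_pos hxe, hxe]
          have := aux_negMulLog_le_one_sub
            (ENNReal.toReal_nonneg (a := (condDistrib (X n) (Z n) μ) z {xhat n z}))
          have hsq : 0 ≤ Real.sqrt e := Real.sqrt_nonneg e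
          linarith [this]
        · rw [if_neg hxe]
          have hple : ((condDistrib (X n) (Z n) μ) z {x}).toReal ≤ e := by
            have hdisj : Disjoint ({x} : Set ℝ) {xhat n z} :=
              Set.disjoint_singleton.2 hxe
            have hunion : (condDistrib (X n) (Z n) μ) z ({x} ∪ {xhat n z})
                = (condDistrib (X n) (Z n) μ) z {x}
                  + (condDistrib (X n) (Z n) μ) z {xhat n z} :=
              measure_union hdisj (measurableSet_singleton _)
            have hle1 : (condDistrib (X n) (Z n) μ) z ({x} ∪ {xhat n z}) ≤ 1 :=
              prob_le_one
            have := ENNReal.toReal_mono ENNReal.one_ne_top (hunion ▸ hle1)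
            rw [ENNReal.toReal_add (measure_ne_top _ _) (measure_ne_top _ _)] at this
            simp only [ENNReal.toReal_one] at this
            linarith
          calc Real.negMulLog (((condDistrib (X n) (Z n) μ) z {x}).toReal)
              ≤ 2 * Real.sqrt (((condDistrib (X n) (Z n) μ) z {x}).toReal) :=
                aux_negMulLog_le_two_sqrt ENNReal.toReal_nonneg
            _ ≤ 2 * Real.sqrt e := by
                have := Real.sqrt_le_sqrt hple
                linarith
            _ = 0 + 2 * Real.sqrt e := by ring
      calc ∑ x ∈ S n, Real.negMulLog (((condDistrib (X n) (Z n) μ) z {x}).toReal)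
          ≤ ∑ x ∈ S n, ((if x = xhat n z then e else 0) + 2 * Real.sqrt e) :=
            Finset.sum_le_sum hterm
        _ = (∑ x ∈ S n, if x = xhat n z then e else 0)
            + (S n).card * (2 * Real.sqrt e) := by
            rw [Finset.sum_add_distrib, Finset.sum_const, nsmul_eq_mul]
        _ ≤ e + (K : ℝ) * (2 * Real.sqrt e) := by
            refine add_le_add ?_ ?_
            · rw [Finset.sum_ite_eq' (S n) (xhat n z) (fun _ => e)]
              split_ifs <;> linarith
            · have h2s : 0 ≤ 2 * Real.sqrt e := by positivity
              have hcK : ((S n).card : ℝ) ≤ (K : ℝ) := by exact_mod_cast hK n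
              exact mul_le_mul_of_nonneg_right hcK h2s
    -- measurability and integrability of the entropy integrand
    have hH_meas : Measurable fun z =>
        ∑ x ∈ S n, Real.negMulLog (((condDistrib (X n) (Z n) μ) z {x}).toReal) := by
      refine Finset.measurable_sum _ fun x _ => ?_
      exact Real.continuous_negMulLog.measurable.comp
        ((Kernel.measurable_coe _ (measurableSet_singleton x)).ennreal_toReal)
    have hH_int : Integrable (fun z =>
        ∑ x ∈ S n, Real.negMulLog (((condDistrib (X n) (Z n) μ) z {x}).toReal))
        (μ.map (Z n)) := by
      refine Integrable.mono' (integrable_const ((K : ℝ) * 2)) hH_meas.aestronglyMeasurable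
        (Eventually.of_forall fun z => ?_)
      rw [Real.norm_eq_abs, abs_of_nonneg (Finset.sum_nonneg fun x _ =>
        Real.negMulLog_nonneg ENNReal.toReal_nonneg (hp01 n z x))]
      calc ∑ x ∈ S n, Real.negMulLog (((condDistrib (X n) (Z n) μ) z {x}).toReal)
          ≤ ∑ x ∈ S n, (2 : ℝ) := by
            refine Finset.sum_le_sum fun x _ => ?_
            calc Real.negMulLog (((condDistrib (X n) (Z n) μ) z {x}).toReal)
                ≤ 2 * Real.sqrt (((condDistrib (X n) (Z n) μ) z {x}).toReal) :=
                  aux_negMulLog_le_two_sqrt ENNReal.toReal_nonneg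
              _ ≤ 2 * 1 := by
                  have : Real.sqrt (((condDistrib (X n) (Z n) μ) z {x}).toReal) ≤ 1 := by
                    rw [show (1:ℝ) = Real.sqrt 1 from (Real.sqrt_one).symm]
                    exact Real.sqrt_le_sqrt (hp01 n z x)
                  linarith
              _ = 2 := by ring
        _ = (S n).card * 2 := by rw [Finset.sum_const, nsmul_eq_mul]
        _ ≤ (K : ℝ) * 2 := by
            have hcK : ((S n).card : ℝ) ≤ (K : ℝ) := by exact_mod_cast hK n
            linarith
    have hg_int : Integrable (fun z =>
        1 - ((condDistrib (X n) (Z n) μ) z {xhat n z}).toReal) (μ.map (Z n)) :=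
      (integrable_const 1).sub hκ_int
    -- the sqrt bound
    have hsqrt : ∀ z : ℝ,
        Real.sqrt (1 - ((condDistrib (X n) (Z n) μ) z {xhat n z}).toReal)
        ≤ (1 - ((condDistrib (X n) (Z n) μ) z {xhat n z}).toReal) / (2 * δ) + δ / 2 := by
      intro z
      obtain ⟨he0, _⟩ := hg01 z
      set e : ℝ := 1 - ((condDistrib (X n) (Z n) μ) z {xhat n z}).toReal
      have hsq : Real.sqrt e ^ 2 = e := Real.sq_sqrt he0
      have h0 := sq_nonneg (Real.sqrt e - δ)
      have key : 2 * δ * Real.sqrt e ≤ e + δ ^ 2 := by nlinarith [h0, hsq]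
      have hδ' : (0:ℝ) < 2 * δ := by positivity
      calc Real.sqrt e = (2 * δ * Real.sqrt e) / (2 * δ) := by field_simp
        _ ≤ (e + δ ^ 2) / (2 * δ) := by gcongr
        _ = e / (2 * δ) + δ / 2 := by field_simp
    -- put everything together
    have hfinal : finCondEntropy μ (X n) (Z n) (S n)
        ≤ ∫ z, ((1 - ((condDistrib (X n) (Z n) μ) z {xhat n z}).toReal) * (1 + (K : ℝ) / δ)
            + (K : ℝ) * δ) ∂(μ.map (Z n)) := by
      unfold finCondEntropy
      refine integral_mono hH_int ((hg_int.mul_const _).add (integrable_const _)) fun z => ?_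
      have hb1 := hHg z
      have hb2 := hsqrt z
      obtain ⟨he0, _⟩ := hg01 z
      have hK0 : (0:ℝ) ≤ (K : ℝ) := Nat.cast_nonneg K
      set e : ℝ := 1 - ((condDistrib (X n) (Z n) μ) z {xhat n z}).toReal with he_def
      have hmul : (K : ℝ) * (2 * Real.sqrt e) ≤ (K : ℝ) * (2 * (e / (2 * δ) + δ / 2)) := by
        have h2 : 2 * Real.sqrt e ≤ 2 * (e / (2 * δ) + δ / 2) := by linarith
        exact mul_le_mul_of_nonneg_left h2 hK0
      have hrw : e + (K : ℝ) * (2 * (e / (2 * δ) + δ / 2))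
          = e * (1 + (K : ℝ) / δ) + (K : ℝ) * δ := by
        field_simp
        ring
      show ∑ x ∈ S n, Real.negMulLog (((condDistrib (X n) (Z n) μ) z {x}).toReal)
          ≤ e * (1 + (K : ℝ) / δ) + (K : ℝ) * δ
      linarith [hb1, hmul, hrw.le, hrw.ge]
    have hrhs : ∫ z, ((1 - ((condDistrib (X n) (Z n) μ) z {xhat n z}).toReal) * (1 + (K : ℝ) / δ)
            + (K : ℝ) * δ) ∂(μ.map (Z n))
        = q n * (1 + (K : ℝ) / δ) + (K : ℝ) * δ := by
      rw [integral_add (hg_int.mul_const _) (integrable_const _), integral_mul_const, h3]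
      simp [measure_univ]
    rw [← hrhs]
    exact hfinal
  -- conclusion
  have hmain : Tendsto (fun n => finCondEntropy μ (X n) (Z n) (S n)) atTop (nhds 0) := by
    rw [NormedAddCommGroup.tendsto_nhds_zero]
    intro ε' hε'
    have hKpos : (0 : ℝ) < (K : ℝ) + 1 := by positivity
    set δ : ℝ := ε' / (2 * ((K : ℝ) + 1)) with hδ_def
    have hδpos : 0 < δ := by positivity
    have hKδ : (K : ℝ) * δ < ε' / 2 := by
      rw [hδ_def, show (K:ℝ) * (ε'/(2*((K:ℝ)+1))) = (K:ℝ)*ε'/(2*((K:ℝ)+1)) from by ring,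
        div_lt_div_iff₀ (by positivity) (by norm_num : (0:ℝ) < 2)]
      nlinarith [hε', Nat.cast_nonneg (α := ℝ) K]
    have hqev : ∀ᶠ n in atTop, q n * (1 + (K : ℝ) / δ) < ε' / 2 := by
      have : Tendsto (fun n => q n * (1 + (K : ℝ) / δ)) atTop (nhds 0) := by
        simpa using hq_tendsto.mul_const (1 + (K : ℝ) / δ)
      exact (this.eventually (eventually_lt_nhds (by positivity : (0:ℝ) < ε' / 2)))
    filter_upwards [hqev] with n hn
    rw [Real.norm_eq_abs, abs_of_nonneg (hent_nonneg n)]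
    calc finCondEntropy μ (X n) (Z n) (S n)
        ≤ q n * (1 + (K : ℝ) / δ) + (K : ℝ) * δ := hent_le n δ hδpos
      _ < ε' / 2 + ε' / 2 := by linarith
      _ = ε' := by ring
  refine ⟨hmain, ?_⟩
  have : (fun n => finEntropy μ (X n) (S n) - finMutualInfo μ (X n) (Z n) (S n))
      = fun n => finCondEntropy μ (X n) (Z n) (S n) := by
    funext n
    simp [finMutualInfo]
  rw [this]
  exact hmain
end

section
/- Let (X_n, Z_n), n = 1, 2, ..., be a sequence of pairs of real-valued random variables such that both X_n and Z_n have finite supports (each of cardinality at least 2, bounded above by a constant independent of n, with finite positive variances), and such that the standardized supports of both X_n · V[X_n]^{-1/2} and Z_n · V[Z_n]^{-1/2} have pairwise separations uniformly bounded below by a positive constant, and the conditional mean functions E[Z_n V[Z_n]^{-1/2} | X_n = x] are one-to-one on the support of X_n. Then at least one of the following holds: (a) H(X_n) − H(Z_n) → 0 as n → ∞, or (b) ν(X_n | Z_n) and ν(Z_n | X_n) do not both converge to zero as n → ∞. -/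
open MeasureTheory ProbabilityTheory Real Filter

open MeasureTheory ProbabilityTheory Real Filter

lemma negMulLog_add_le' {a b : ℝ} (ha : 0 ≤ a) (hb : 0 ≤ b) (hab : a + b ≤ 1) :
    Real.negMulLog (a + b) ≤ Real.negMulLog a + Real.negMulLog b := by
  rcases eq_or_lt_of_le ha with rfl | ha'
  · simp
  rcases eq_or_lt_of_le hb with rfl | hb'
  · simp
  have h1 : Real.log a ≤ Real.log (a + b) := Real.log_le_log ha' (by linarith)
  have h2 : Real.log b ≤ Real.log (a + b) := Real.log_le_log hb' (by linarith)
  simp only [Real.negMulLog, neg_mul]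
  nlinarith [mul_le_mul_of_nonneg_left h1 ha, mul_le_mul_of_nonneg_left h2 hb]

lemma negMulLog_sum_le' {ι : Type*} (s : Finset ι) (a : ι → ℝ)
    (ha : ∀ i ∈ s, 0 ≤ a i) (h1 : ∑ i ∈ s, a i ≤ 1) :
    Real.negMulLog (∑ i ∈ s, a i) ≤ ∑ i ∈ s, Real.negMulLog (a i) := by
  induction s using Finset.cons_induction with
  | empty => simp
  | cons i s his ih =>
    rw [Finset.sum_cons, Finset.sum_cons]
    have hsum0 : 0 ≤ ∑ j ∈ s, a j :=
      Finset.sum_nonneg fun j hj => ha j (Finset.mem_cons_of_mem hj)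
    have hai : 0 ≤ a i := ha i (Finset.mem_cons_self i s)
    rw [Finset.sum_cons] at h1
    calc Real.negMulLog (a i + ∑ j ∈ s, a j)
        ≤ Real.negMulLog (a i) + Real.negMulLog (∑ j ∈ s, a j) :=
          negMulLog_add_le' hai hsum0 h1
      _ ≤ Real.negMulLog (a i) + ∑ j ∈ s, Real.negMulLog (a j) := by
          gcongr
          exact ih (fun j hj => ha j (Finset.mem_cons_of_mem hj)) (by linarith)

lemma negMulLog_le_two_sqrt {t : ℝ} (ht : 0 ≤ t) : Real.negMulLog t ≤ 2 * Real.sqrt t := by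
  rcases eq_or_lt_of_le ht with rfl | ht'
  · simp
  have hst : 0 < Real.sqrt t := Real.sqrt_pos.2 ht'
  have h1 : Real.log (Real.sqrt t)⁻¹ ≤ (Real.sqrt t)⁻¹ - 1 :=
    Real.log_le_sub_one_of_pos (by positivity)
  rw [Real.log_inv] at h1
  have hlt : Real.log t = 2 * Real.log (Real.sqrt t) := by
    rw [Real.log_sqrt ht]; ring
  have h2 : -Real.log t ≤ 2 * (Real.sqrt t)⁻¹ := by rw [hlt]; nlinarith
  have h3 : t * (Real.sqrt t)⁻¹ = Real.sqrt t := by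
    rw [← div_eq_mul_inv, Real.div_sqrt]
  calc Real.negMulLog t = t * (-Real.log t) := by unfold Real.negMulLog; ring
    _ ≤ t * (2 * (Real.sqrt t)⁻¹) := by nlinarith
    _ = 2 * Real.sqrt t := by rw [mul_comm (2:ℝ) _, ← mul_assoc, h3]; ring

lemma negMulLog_sub_le {a b : ℝ} (ha0 : 0 ≤ a) (ha1 : a ≤ 1) (hb0 : 0 ≤ b) (hb1 : b ≤ 1)
    (hab : a ≤ b) : Real.negMulLog a - Real.negMulLog b ≤ b - a := by
  rcases eq_or_lt_of_le ha0 with rfl | ha'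
  · simp only [Real.negMulLog_zero, zero_sub, sub_zero, neg_le]
    have := Real.mul_log_nonpos hb0 hb1
    simp only [Real.negMulLog, neg_mul, neg_neg]
    linarith
  have hb' : 0 < b := lt_of_lt_of_le ha' hab
  have h1 : Real.log (b / a) ≤ b / a - 1 := Real.log_le_sub_one_of_pos (by positivity)
  have h2 : Real.log (b / a) = Real.log b - Real.log a := Real.log_div hb'.ne' ha'.ne'
  have h3 : Real.log b ≤ 0 := Real.log_nonpos hb0 hb1
  have h4 : a * (Real.log b - Real.log a) ≤ b - a := by
    have h5 := mul_le_mul_of_nonneg_left h1 ha0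
    rw [h2] at h5
    have h6 : a * (b / a - 1) = b - a := by field_simp
    linarith
  simp only [Real.negMulLog, neg_mul]
  nlinarith [mul_le_mul_of_nonneg_left h3 (sub_nonneg.2 hab)]

lemma negMulLog_diff_le {a b t : ℝ} (ha0 : 0 ≤ a) (ha1 : a ≤ 1) (hb0 : 0 ≤ b) (hb1 : b ≤ 1)
    (habt : |a - b| ≤ t) : Real.negMulLog a - Real.negMulLog b ≤ t + 2 * Real.sqrt t := by
  have ht0 : 0 ≤ t := le_trans (abs_nonneg _) habt
  have hst : 0 ≤ Real.sqrt t := Real.sqrt_nonneg t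
  rcases le_total a b with hab | hab
  · have := negMulLog_sub_le ha0 ha1 hb0 hb1 hab
    have : b - a ≤ t := by rw [abs_sub_comm] at habt; exact le_trans (le_abs_self _) habt
    have := negMulLog_sub_le ha0 ha1 hb0 hb1 hab
    linarith
  · have hd : a - b ≤ t := le_trans (le_abs_self _) habt
    have hd0 : 0 ≤ a - b := sub_nonneg.2 hab
    have h1 : Real.negMulLog a ≤ Real.negMulLog b + Real.negMulLog (a - b) := by
      have := negMulLog_add_le' hb0 hd0 (by linarith)
      simpa [add_sub_cancel] using this
    have h2 : Real.negMulLog (a - b) ≤ 2 * Real.sqrt (a - b) := negMulLog_le_two_sqrt hd0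
    have h3 : Real.sqrt (a - b) ≤ Real.sqrt t := Real.sqrt_le_sqrt hd
    linarith

section condlemmas
open MeasureTheory ProbabilityTheory

lemma measurable_condMean {Ω : Type*} [mΩ : MeasurableSpace Ω] (μ : Measure Ω)
    (X Z : Ω → ℝ) (hZ : Measurable Z) : Measurable (condMean μ X Z) :=
  (stronglyMeasurable_condExp (m := MeasurableSpace.comap Z inferInstance)
    (μ := μ) (f := X)).measurable.mono hZ.comap_le le_rfl

lemma condMean_fiber {Ω : Type*} [mΩ : MeasurableSpace Ω] (μ : Measure Ω)
    (X Z : Ω → ℝ) {ω ω' : Ω} (h : Z ω = Z ω') :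
    condMean μ X Z ω = condMean μ X Z ω' := by
  set c := condMean μ X Z with hc
  have hcsm : StronglyMeasurable[MeasurableSpace.comap Z inferInstance] c :=
    stronglyMeasurable_condExp
  have hms : MeasurableSet[MeasurableSpace.comap Z inferInstance] (c ⁻¹' {c ω}) :=
    hcsm.measurable (measurableSet_singleton _)
  rw [MeasurableSpace.measurableSet_comap] at hms
  obtain ⟨B', -, hB'⟩ := hms
  have hω : ω ∈ Z ⁻¹' B' := by rw [hB']; exact rfl
  have hω' : ω' ∈ Z ⁻¹' B' := by rw [Set.mem_preimage, ← h]; exact hω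
  rw [hB'] at hω'
  exact (Set.mem_singleton_iff.1 hω').symm

lemma condMean_abs_le {Ω : Type*} [mΩ : MeasurableSpace Ω] (μ : Measure Ω)
    [IsProbabilityMeasure μ] (X Z : Ω → ℝ) (hZ : Measurable Z)
    (hXint : Integrable X μ) {C : ℝ} (hC : ∀ᵐ ω ∂μ, |X ω| ≤ C) :
    ∀ᵐ ω ∂μ, |condMean μ X Z ω| ≤ C := by
  have hle : MeasurableSpace.comap Z inferInstance ≤ mΩ := hZ.comap_le
  haveI : SigmaFinite (μ.trim hle) := by
    haveI : IsFiniteMeasure (μ.trim hle) := isFiniteMeasure_trim hle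
    infer_instance
  have hub : condMean μ X Z ≤ᵐ[μ] fun _ => C := by
    have h1 : X ≤ᵐ[μ] fun _ => C := hC.mono fun ω h => (abs_le.1 h).2
    have h2 := condExp_mono (m := MeasurableSpace.comap Z inferInstance)
      hXint (integrable_const C) h1
    rw [condExp_const hle] at h2
    exact h2
  have hlb : (fun _ : Ω => -C) ≤ᵐ[μ] condMean μ X Z := by
    have h1 : (fun _ : Ω => -C) ≤ᵐ[μ] X := hC.mono fun ω h => (abs_le.1 h).1
    have h2 := condExp_mono (m := MeasurableSpace.comap Z inferInstance)
      (integrable_const (-C)) hXint h1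
    rw [condExp_const hle] at h2
    exact h2
  filter_upwards [hub, hlb] with ω h1 h2
  exact abs_le.2 ⟨h2, h1⟩

end condlemmas

section helpers
open MeasureTheory

lemma meas_inter_preimage_finset {Ω : Type*} [MeasurableSpace Ω] (μ : Measure Ω)
    [IsProbabilityMeasure μ] (A : Set Ω) (hA : MeasurableSet A)
    {W : Ω → ℝ} (hW : Measurable W) (U : Finset ℝ) :
    (μ (A ∩ W ⁻¹' ↑U)).toReal = ∑ u ∈ U, (μ (A ∩ W ⁻¹' {u})).toReal := by
  have h1 : A ∩ W ⁻¹' ↑U = ⋃ u ∈ U, A ∩ W ⁻¹' {u} := by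
    ext ω
    simp only [Set.mem_inter_iff, Set.mem_preimage, Finset.mem_coe, Set.mem_iUnion,
      Set.mem_singleton_iff]
    constructor
    · rintro ⟨hA', hU⟩; exact ⟨W ω, hU, hA', rfl⟩
    · rintro ⟨u, hu, hA', rfl⟩; exact ⟨hA', hu⟩
  have h2 : μ (A ∩ W ⁻¹' ↑U) = ∑ u ∈ U, μ (A ∩ W ⁻¹' {u}) := by
    rw [h1]
    refine measure_biUnion_finset ?_ fun u _ => hA.inter (hW (measurableSet_singleton u))
    intro u _ v _ huv
    rw [Function.onFun, Set.disjoint_left]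
    rintro ω ⟨-, h1'⟩ ⟨-, h2'⟩
    exact huv ((Set.mem_singleton_iff.1 h1').symm.trans (Set.mem_singleton_iff.1 h2'))
  rw [h2, ENNReal.toReal_sum fun u _ => measure_ne_top μ _]

end helpers

section lemA
open MeasureTheory ProbabilityTheory Real Filter

lemma entropy_sub_le_of_nu {Ω : Type*} [mΩ : MeasurableSpace Ω] (μ : Measure Ω)
    [IsProbabilityMeasure μ]
    (X Z : Ω → ℝ) (S T : Finset ℝ) (ε : ℝ) (hε : 0 < ε)
    (hX : Measurable X) (hZ : Measurable Z)
    (hSne : S.Nonempty)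
    (hS : μ (X ⁻¹' ↑S) = 1) (hT : μ (Z ⁻¹' ↑T) = 1)
    (hvar : 0 < variance X μ)
    (hsep : ∀ x ∈ S, ∀ y ∈ S, x ≠ y →
      2 * ε ≤ |x / Real.sqrt (variance X μ) - y / Real.sqrt (variance X μ)|) :
    finEntropy μ X S - finEntropy μ Z T ≤
      S.card * ((nuScalar μ X Z / ε ^ 2) + 2 * Real.sqrt (nuScalar μ X Z / ε ^ 2)) := by
  classical
  set p := nuScalar μ X Z / ε ^ 2 with hpdef
  set σ := Real.sqrt (variance X μ) with hσdef
  have hσ : 0 < σ := Real.sqrt_pos.2 hvar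
  set δ := ε * σ with hδdef
  have hδ : 0 < δ := mul_pos hε hσ
  set c := condMean μ X Z with hcdef
  have hcm : Measurable c := measurable_condMean μ X Z hZ
  have hfib : ∀ ω ω', Z ω = Z ω' → c ω = c ω' := fun ω ω' h => condMean_fiber μ X Z h
  -- measurable sets and null complements
  have hSm : MeasurableSet (↑S : Set ℝ) := S.finite_toSet.measurableSet
  have hTm : MeasurableSet (↑T : Set ℝ) := T.finite_toSet.measurableSet
  have hSc : μ ((X ⁻¹' ↑S)ᶜ) = 0 := by
    rw [measure_compl (hX hSm) (measure_ne_top μ _), hS, measure_univ, tsub_self]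
  have hTc : μ ((Z ⁻¹' ↑T)ᶜ) = 0 := by
    rw [measure_compl (hZ hTm) (measure_ne_top μ _), hT, measure_univ, tsub_self]
  have haeS : ∀ᵐ ω ∂μ, X ω ∈ (↑S : Set ℝ) := by
    rw [ae_iff]; exact hSc
  -- a.e. bounds
  obtain ⟨x₀, hx₀S, hx₀⟩ := S.exists_max_image (fun x => |x|) hSne
  set C := |x₀| with hCdef
  have hXbd : ∀ᵐ ω ∂μ, |X ω| ≤ C := haeS.mono fun ω h => hx₀ _ h
  have hXint : Integrable X μ := by
    refine Integrable.mono' (integrable_const C) hX.aestronglyMeasurable ?_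
    filter_upwards [hXbd] with ω h
    simpa [Real.norm_eq_abs] using h
  have hcbd : ∀ᵐ ω ∂μ, |c ω| ≤ C := condMean_abs_le μ X Z hZ hXint hXbd
  have hint : Integrable (fun ω => (X ω - c ω) ^ 2) μ := by
    refine Integrable.mono' (integrable_const ((2 * C) ^ 2))
      (((hX.sub hcm).pow_const 2).aestronglyMeasurable) ?_
    filter_upwards [hXbd, hcbd] with ω h1 h2
    have h3 : |X ω - c ω| ≤ 2 * C := by
      have := abs_le.1 h1; have := abs_le.1 h2
      exact abs_le.2 ⟨by linarith [(abs_le.1 h1).1, (abs_le.1 h2).1],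
        by linarith [(abs_le.1 h1).2, (abs_le.1 h2).2]⟩
    have h4 : (X ω - c ω) ^ 2 ≤ (2 * C) ^ 2 := by nlinarith [abs_nonneg (X ω - c ω), sq_abs (X ω - c ω)]
    rw [Real.norm_eq_abs, abs_of_nonneg (sq_nonneg _)]
    exact h4
  -- Chebyshev
  set B := {ω | δ ≤ |X ω - c ω|} with hBdef
  have hBm : MeasurableSet B := measurableSet_le measurable_const ((hX.sub hcm).abs)
  have hnu_eq : nuScalar μ X Z = (∫ ω, (X ω - c ω) ^ 2 ∂μ) / variance X μ := rfl
  have hnu0 : 0 ≤ nuScalar μ X Z :=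
    div_nonneg (integral_nonneg fun ω => sq_nonneg _) hvar.le
  have hp0 : 0 ≤ p := div_nonneg hnu0 (by positivity)
  have hmuB : (μ B).toReal ≤ p := by
    have h1 : δ ^ 2 * (μ B).toReal ≤ ∫ ω in B, (X ω - c ω) ^ 2 ∂μ := by
      refine setIntegral_ge_of_const_le_real hBm (measure_ne_top μ B) ?_ hint.integrableOn
      intro ω hω
      have h : δ ≤ |X ω - c ω| := hω
      nlinarith [sq_abs (X ω - c ω)]
    have h2 := setIntegral_le_integral (s := B) hint (ae_of_all μ fun ω => sq_nonneg (X ω - c ω))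
    have h3 : ∫ ω, (X ω - c ω) ^ 2 ∂μ = nuScalar μ X Z * variance X μ := by
      rw [hnu_eq, div_mul_cancel₀ _ hvar.ne']
    have hδ2 : δ ^ 2 = ε ^ 2 * variance X μ := by
      rw [hδdef, mul_pow, hσdef, Real.sq_sqrt hvar.le]
    rw [hpdef, le_div_iff₀ (by positivity : (0:ℝ) < ε ^ 2)]
    have h5 : δ ^ 2 * (μ B).toReal = (μ B).toReal * ε ^ 2 * variance X μ := by
      rw [hδ2]; ring
    have h4 : (μ B).toReal * ε ^ 2 * variance X μ ≤ nuScalar μ X Z * variance X μ := by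
      linarith
    exact (mul_le_mul_iff_left₀ hvar).1 h4
  -- separation in raw scale
  have hsep' : ∀ x ∈ S, ∀ y ∈ S, x ≠ y → 2 * δ ≤ |x - y| := by
    intro x hx y hy hxy
    have h := hsep x hx y hy hxy
    rw [div_sub_div_same, abs_div, abs_of_pos hσ] at h
    have h2 := (le_div_iff₀ hσ).1 h
    calc 2 * δ = 2 * ε * σ := by rw [hδdef]; ring
      _ ≤ |x - y| := h2
  -- probability notation
  set PJ : ℝ → ℝ → ℝ := fun x z => (μ (X ⁻¹' {x} ∩ Z ⁻¹' {z})).toReal with hPJdef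
  set PZr : ℝ → ℝ := fun z => (μ (Z ⁻¹' {z})).toReal with hPZdef
  set PXr : ℝ → ℝ := fun x => (μ (X ⁻¹' {x})).toReal with hPXdef
  have hPJ0 : ∀ x z, 0 ≤ PJ x z := fun _ _ => ENNReal.toReal_nonneg
  have hPJle : ∀ x z, PJ x z ≤ PZr z := fun x z =>
    ENNReal.toReal_mono (measure_ne_top μ _) (measure_mono Set.inter_subset_right)
  have hPX0 : ∀ x, 0 ≤ PXr x := fun _ => ENNReal.toReal_nonneg
  have hPX1 : ∀ x, PXr x ≤ 1 := fun x => by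
    simpa using ENNReal.toReal_mono (by simp) (prob_le_one (μ := μ) (s := X ⁻¹' {x}))
  have hPXsum : ∀ x, PXr x = ∑ z ∈ T, PJ x z := by
    intro x
    have h1 : μ (X ⁻¹' {x}) = μ (X ⁻¹' {x} ∩ Z ⁻¹' ↑T) := (measure_inter_conull hTc).symm
    rw [hPXdef]
    simp only
    rw [h1, meas_inter_preimage_finset μ _ (hX (measurableSet_singleton x)) hZ T]
  have hPZsum1 : ∑ z ∈ T, PZr z = 1 := by
    have h1 := meas_inter_preimage_finset μ Set.univ MeasurableSet.univ hZ T
    simp only [Set.univ_inter] at h1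
    rw [hPZdef]
    simp only
    rw [← h1, hT, ENNReal.toReal_one]
  -- argmax function
  have hex : ∀ z : ℝ, ∃ x ∈ S, ∀ y ∈ S, PJ y z ≤ PJ x z := fun z =>
    S.exists_max_image (fun x => PJ x z) hSne
  choose f hfS hfmax using hex
  set D := ∑ z ∈ T, (PZr z - PJ (f z) z) with hDdef
  have hD0 : 0 ≤ D := Finset.sum_nonneg fun z _ => sub_nonneg.2 (hPJle _ _)
  have hDle : D ≤ (μ B).toReal := by
    have key : ∀ z ∈ T, PZr z - PJ (f z) z ≤ (μ (B ∩ Z ⁻¹' {z})).toReal := by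
      intro z hz
      set G := (Z ⁻¹' {z} ∩ Bᶜ) ∩ X ⁻¹' ↑S with hGdef
      have hGle : (μ G).toReal ≤ PJ (f z) z := by
        rcases Set.eq_empty_or_nonempty G with hGe | ⟨ω₀, hω₀⟩
        · rw [hGe]; simpa using hPJ0 (f z) z
        · obtain ⟨⟨hz0, hb0⟩, hxS0⟩ := hω₀
          have hsub : G ⊆ X ⁻¹' {X ω₀} := by
            rintro ω ⟨⟨hz1, hb1⟩, hxS1⟩
            have hcc : c ω = c ω₀ := hfib ω ω₀ (by
              rw [Set.mem_preimage, Set.mem_singleton_iff] at hz1 hz0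
              rw [hz1, hz0])
            have h1 : |X ω - c ω| < δ := lt_of_not_ge hb1
            have h2 : |X ω₀ - c ω₀| < δ := lt_of_not_ge hb0
            rw [Set.mem_preimage, Set.mem_singleton_iff]
            by_contra hne
            have h3 := hsep' _ hxS1 _ hxS0 hne
            have h4 : |X ω - X ω₀| ≤ |X ω - c ω| + |X ω₀ - c ω₀| := by
              rw [hcc]
              calc |X ω - X ω₀| ≤ |X ω - c ω₀| + |c ω₀ - X ω₀| := abs_sub_le _ _ _
                _ = |X ω - c ω₀| + |X ω₀ - c ω₀| := by rw [abs_sub_comm (c ω₀)]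
            linarith
          have h5 : G ⊆ X ⁻¹' {X ω₀} ∩ Z ⁻¹' {z} := fun ω hω => ⟨hsub hω, hω.1.1⟩
          calc (μ G).toReal ≤ PJ (X ω₀) z :=
                ENNReal.toReal_mono (measure_ne_top μ _) (measure_mono h5)
            _ ≤ PJ (f z) z := hfmax z (X ω₀) hxS0
      have hsplit : μ (Z ⁻¹' {z}) ≤ μ (B ∩ Z ⁻¹' {z}) + μ G + μ ((X ⁻¹' ↑S)ᶜ) := by
        have hsub2 : Z ⁻¹' {z} ⊆ (B ∩ Z ⁻¹' {z}) ∪ (G ∪ (X ⁻¹' ↑S)ᶜ) := by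
          intro ω hω
          by_cases hb : ω ∈ B
          · exact Or.inl ⟨hb, hω⟩
          · by_cases hs' : X ω ∈ (↑S : Set ℝ)
            · exact Or.inr (Or.inl ⟨⟨hω, hb⟩, hs'⟩)
            · exact Or.inr (Or.inr hs')
        calc μ (Z ⁻¹' {z}) ≤ μ ((B ∩ Z ⁻¹' {z}) ∪ (G ∪ (X ⁻¹' ↑S)ᶜ)) := measure_mono hsub2
          _ ≤ μ (B ∩ Z ⁻¹' {z}) + μ (G ∪ (X ⁻¹' ↑S)ᶜ) := measure_union_le _ _
          _ ≤ μ (B ∩ Z ⁻¹' {z}) + (μ G + μ ((X ⁻¹' ↑S)ᶜ)) := by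
              gcongr; exact measure_union_le _ _
          _ = _ := by rw [add_assoc]
      rw [hSc, add_zero] at hsplit
      have h6 := ENNReal.toReal_mono
        (ENNReal.add_ne_top.2 ⟨measure_ne_top μ _, measure_ne_top μ _⟩) hsplit
      rw [ENNReal.toReal_add (measure_ne_top μ _) (measure_ne_top μ _)] at h6
      have h7 : PZr z = (μ (Z ⁻¹' {z})).toReal := rfl
      linarith
    calc D ≤ ∑ z ∈ T, (μ (B ∩ Z ⁻¹' {z})).toReal := Finset.sum_le_sum key
      _ = (μ (B ∩ Z ⁻¹' ↑T)).toReal := (meas_inter_preimage_finset μ B hBm hZ T).symm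
      _ ≤ (μ B).toReal :=
          ENNReal.toReal_mono (measure_ne_top μ _) (measure_mono Set.inter_subset_left)
  -- pushforward distribution
  set Q : ℝ → ℝ := fun x => ∑ z ∈ T.filter (fun z => f z = x), PZr z with hQdef
  have hQ0 : ∀ x, 0 ≤ Q x := fun x =>
    Finset.sum_nonneg fun z _ => ENNReal.toReal_nonneg
  have hQ1 : ∀ x, Q x ≤ 1 := fun x => by
    rw [← hPZsum1]
    exact Finset.sum_le_sum_of_subset_of_nonneg (Finset.filter_subset _ _)
      fun z _ _ => ENNReal.toReal_nonneg
  have hPXQ : ∀ x ∈ S, |PXr x - Q x| ≤ D := by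
    intro x hx
    rw [abs_sub_le_iff]
    constructor
    · have hsplit := Finset.sum_filter_add_sum_filter_not T (fun z => f z = x)
        (fun z => PJ x z)
      have h1 : ∑ z ∈ T.filter (fun z => f z = x), PJ x z ≤ Q x :=
        Finset.sum_le_sum fun z _ => hPJle x z
      have h2 : ∑ z ∈ T.filter (fun z => ¬ f z = x), PJ x z ≤ D := by
        refine le_trans (Finset.sum_le_sum ?_)
          (Finset.sum_le_sum_of_subset_of_nonneg (Finset.filter_subset _ _)
            fun z _ _ => sub_nonneg.2 (hPJle _ _))
        intro z hz
        rw [Finset.mem_filter] at hz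
        have hdisj : μ (X ⁻¹' {x} ∩ Z ⁻¹' {z}) + μ (X ⁻¹' {f z} ∩ Z ⁻¹' {z}) ≤ μ (Z ⁻¹' {z}) := by
          rw [← measure_union ?_ ((hX (measurableSet_singleton _)).inter
            (hZ (measurableSet_singleton _)))]
          · exact measure_mono (Set.union_subset Set.inter_subset_right Set.inter_subset_right)
          · rw [Set.disjoint_left]
            rintro ω ⟨h1', -⟩ ⟨h2', -⟩
            exact hz.2 ((Set.mem_singleton_iff.1 h2').symm ▸
              (Set.mem_singleton_iff.1 h1') ▸ rfl)
        have h4 := ENNReal.toReal_mono (measure_ne_top μ _) hdisj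
        rw [ENNReal.toReal_add (measure_ne_top μ _) (measure_ne_top μ _)] at h4
        have h5 : PJ x z + PJ (f z) z ≤ PZr z := h4
        linarith
      have h6 : PXr x = ∑ z ∈ T.filter (fun z => f z = x), PJ x z +
          ∑ z ∈ T.filter (fun z => ¬ f z = x), PJ x z := by
        rw [hPXsum x, ← hsplit]
      linarith
    · have h1 : ∑ z ∈ T.filter (fun z => f z = x), PJ (f z) z ≤ PXr x := by
        rw [hPXsum x]
        refine le_trans (le_of_eq (Finset.sum_congr rfl fun z hz => ?_))
          (Finset.sum_le_sum_of_subset_of_nonneg (Finset.filter_subset _ _)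
            fun z _ _ => hPJ0 _ _)
        rw [(Finset.mem_filter.1 hz).2]
      have h2 : Q x - ∑ z ∈ T.filter (fun z => f z = x), PJ (f z) z ≤ D := by
        rw [hQdef]
        simp only
        rw [← Finset.sum_sub_distrib]
        exact Finset.sum_le_sum_of_subset_of_nonneg (Finset.filter_subset _ _)
          fun z _ _ => sub_nonneg.2 (hPJle _ _)
      linarith
  -- entropy comparison
  have hDp : D ≤ p := le_trans hDle hmuB
  have hE1 : finEntropy μ X S ≤ (∑ x ∈ S, Real.negMulLog (Q x)) +
      S.card * (p + 2 * Real.sqrt p) := by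
    have hterm : ∀ x ∈ S, Real.negMulLog (PXr x) ≤
        Real.negMulLog (Q x) + (p + 2 * Real.sqrt p) := by
      intro x hx
      have := negMulLog_diff_le (hPX0 x) (hPX1 x) (hQ0 x) (hQ1 x)
        (le_trans (hPXQ x hx) hDp)
      linarith
    calc finEntropy μ X S = ∑ x ∈ S, Real.negMulLog (PXr x) := rfl
      _ ≤ ∑ x ∈ S, (Real.negMulLog (Q x) + (p + 2 * Real.sqrt p)) :=
          Finset.sum_le_sum hterm
      _ = (∑ x ∈ S, Real.negMulLog (Q x)) + S.card * (p + 2 * Real.sqrt p) := by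
          rw [Finset.sum_add_distrib, Finset.sum_const, nsmul_eq_mul]
  have hE2 : ∑ x ∈ S, Real.negMulLog (Q x) ≤ finEntropy μ Z T := by
    have h1 : ∀ x ∈ S, Real.negMulLog (Q x) ≤
        ∑ z ∈ T.filter (fun z => f z = x), Real.negMulLog (PZr z) := by
      intro x _
      exact negMulLog_sum_le' _ _ (fun z _ => ENNReal.toReal_nonneg) (hQ1 x)
    calc ∑ x ∈ S, Real.negMulLog (Q x)
        ≤ ∑ x ∈ S, ∑ z ∈ T.filter (fun z => f z = x), Real.negMulLog (PZr z) :=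
          Finset.sum_le_sum h1
      _ = ∑ z ∈ T, Real.negMulLog (PZr z) :=
          Finset.sum_fiberwise_of_maps_to (fun z _ => hfS z) _
      _ = finEntropy μ Z T := rfl
  linarith

end lemA

/-- corollary to Theorem 2 of the paper. If both `Xₙ` and `Zₙ` have
finite supports (cardinalities in `[2, K]`, finite positive variances), the standardized
supports of both have pairwise separations uniformly bounded below by a positive constant,
and the conditional mean functions `mₙ(x) = E[Zₙ V[Zₙ]^{-1/2} | Xₙ = x]` are one-to-one on
the support of `Xₙ`, then either `H(Xₙ) − H(Zₙ) → 0`, or `ν(Xₙ|Zₙ)` and `ν(Zₙ|Xₙ)` do not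
both converge to zero. -/
theorem stmt_2
    {Ω : Type*} [MeasurableSpace Ω] (μ : Measure Ω) [IsProbabilityMeasure μ]
    (X Z : ℕ → Ω → ℝ) (S T : ℕ → Finset ℝ) (K : ℕ)
    (m : ℕ → ℝ → ℝ)
    (hXmeas : ∀ n, Measurable (X n)) (hZmeas : ∀ n, Measurable (Z n))
    -- the support of `Xₙ` is the finite set `𝒳ₙ = S n`, with `2 ≤ |𝒳ₙ| ≤ K`
    (hcardS : ∀ n, 2 ≤ (S n).card) (hKS : ∀ n, (S n).card ≤ K)
    (hsuppS : ∀ n, μ (X n ⁻¹' ↑(S n)) = 1)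
    (hatomS : ∀ n, ∀ x ∈ S n, μ (X n ⁻¹' {x}) ≠ 0)
    -- the support of `Zₙ` is the finite set `𝒵ₙ = T n`, with `2 ≤ |𝒵ₙ| ≤ K`
    (hcardT : ∀ n, 2 ≤ (T n).card) (hKT : ∀ n, (T n).card ≤ K)
    (hsuppT : ∀ n, μ (Z n ⁻¹' ↑(T n)) = 1)
    (hatomT : ∀ n, ∀ z ∈ T n, μ (Z n ⁻¹' {z}) ≠ 0)
    -- finite positive variances
    (hXL2 : ∀ n, MemLp (X n) 2 μ) (hXvar : ∀ n, 0 < variance (X n) μ)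
    (hZL2 : ∀ n, MemLp (Z n) 2 μ) (hZvar : ∀ n, 0 < variance (Z n) μ)
    -- pairwise separations of standardized supports uniformly bounded below
    (hsepS : ∃ ε : ℝ, 0 < ε ∧ ∀ n, ∀ x ∈ S n, ∀ y ∈ S n, x ≠ y →
      2 * ε ≤ |x / Real.sqrt (variance (X n) μ) - y / Real.sqrt (variance (X n) μ)|)
    (hsepT : ∃ ε : ℝ, 0 < ε ∧ ∀ n, ∀ x ∈ T n, ∀ y ∈ T n, x ≠ y →
      2 * ε ≤ |x / Real.sqrt (variance (Z n) μ) - y / Real.sqrt (variance (Z n) μ)|)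
    -- `mₙ(x) = E[Zₙ V[Zₙ]^{-1/2} | Xₙ = x]` is one-to-one on the support of `Xₙ`
    (hm : ∀ n, (fun ω => m n (X n ω)) =ᵐ[μ]
      condMean μ (fun ω => Z n ω / Real.sqrt (variance (Z n) μ)) (X n))
    (hinj : ∀ n, Set.InjOn (m n) ↑(S n)) :
    Tendsto (fun n => finEntropy μ (X n) (S n) - finEntropy μ (Z n) (T n)) atTop (nhds 0) ∨
    ¬ (Tendsto (fun n => nuScalar μ (X n) (Z n)) atTop (nhds 0) ∧
       Tendsto (fun n => nuScalar μ (Z n) (X n)) atTop (nhds 0)) := by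
  by_cases hnu : Tendsto (fun n => nuScalar μ (X n) (Z n)) atTop (nhds 0) ∧
      Tendsto (fun n => nuScalar μ (Z n) (X n)) atTop (nhds 0)
  swap
  · exact Or.inr hnu
  left
  obtain ⟨ε₁, hε₁, hsep₁⟩ := hsepS
  obtain ⟨ε₂, hε₂, hsep₂⟩ := hsepT
  have hSne : ∀ n, (S n).Nonempty := fun n => Finset.card_pos.1 (by linarith [hcardS n])
  have hTne : ∀ n, (T n).Nonempty := fun n => Finset.card_pos.1 (by linarith [hcardT n])
  set g₁ : ℕ → ℝ := fun n => (K : ℝ) * ((nuScalar μ (X n) (Z n) / ε₁ ^ 2) +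
    2 * Real.sqrt (nuScalar μ (X n) (Z n) / ε₁ ^ 2)) with hg₁def
  set g₂ : ℕ → ℝ := fun n => (K : ℝ) * ((nuScalar μ (Z n) (X n) / ε₂ ^ 2) +
    2 * Real.sqrt (nuScalar μ (Z n) (X n) / ε₂ ^ 2)) with hg₂def
  have hnuX0 : ∀ n, 0 ≤ nuScalar μ (X n) (Z n) := fun n =>
    div_nonneg (integral_nonneg fun ω => sq_nonneg _) (hXvar n).le
  have hnuZ0 : ∀ n, 0 ≤ nuScalar μ (Z n) (X n) := fun n =>
    div_nonneg (integral_nonneg fun ω => sq_nonneg _) (hZvar n).le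
  have hub : ∀ n, finEntropy μ (X n) (S n) - finEntropy μ (Z n) (T n) ≤ g₁ n := by
    intro n
    have h := entropy_sub_le_of_nu μ (X n) (Z n) (S n) (T n) ε₁ hε₁ (hXmeas n) (hZmeas n)
      (hSne n) (hsuppS n) (hsuppT n) (hXvar n) (hsep₁ n)
    refine le_trans h ?_
    have hb0 : 0 ≤ (nuScalar μ (X n) (Z n) / ε₁ ^ 2) +
        2 * Real.sqrt (nuScalar μ (X n) (Z n) / ε₁ ^ 2) := by
      have := hnuX0 n
      positivity
    exact mul_le_mul_of_nonneg_right (by exact_mod_cast Nat.cast_le.2 (hKS n)) hb0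
  have hlb : ∀ n, -(g₂ n) ≤ finEntropy μ (X n) (S n) - finEntropy μ (Z n) (T n) := by
    intro n
    have h := entropy_sub_le_of_nu μ (Z n) (X n) (T n) (S n) ε₂ hε₂ (hZmeas n) (hXmeas n)
      (hTne n) (hsuppT n) (hsuppS n) (hZvar n) (hsep₂ n)
    have hb0 : 0 ≤ (nuScalar μ (Z n) (X n) / ε₂ ^ 2) +
        2 * Real.sqrt (nuScalar μ (Z n) (X n) / ε₂ ^ 2) := by
      have := hnuZ0 n
      positivity
    have h2 : finEntropy μ (Z n) (T n) - finEntropy μ (X n) (S n) ≤ g₂ n :=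
      le_trans h (mul_le_mul_of_nonneg_right (by exact_mod_cast Nat.cast_le.2 (hKT n)) hb0)
    linarith
  have hg₁0 : Tendsto g₁ atTop (nhds 0) := by
    have h1 : Tendsto (fun n => nuScalar μ (X n) (Z n) / ε₁ ^ 2) atTop (nhds 0) := by
      simpa using hnu.1.div_const (ε₁ ^ 2)
    have h2 : Tendsto (fun n => Real.sqrt (nuScalar μ (X n) (Z n) / ε₁ ^ 2)) atTop (nhds 0) := by
      simpa [Real.sqrt_zero] using h1.sqrt
    have := (h1.add (h2.const_mul 2)).const_mul (K : ℝ)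
    simpa [hg₁def, mul_comm] using this
  have hg₂0 : Tendsto g₂ atTop (nhds 0) := by
    have h1 : Tendsto (fun n => nuScalar μ (Z n) (X n) / ε₂ ^ 2) atTop (nhds 0) := by
      simpa using hnu.2.div_const (ε₂ ^ 2)
    have h2 : Tendsto (fun n => Real.sqrt (nuScalar μ (Z n) (X n) / ε₂ ^ 2)) atTop (nhds 0) := by
      simpa [Real.sqrt_zero] using h1.sqrt
    have := (h1.add (h2.const_mul 2)).const_mul (K : ℝ)
    simpa [hg₂def, mul_comm] using this
  have hg₂0' : Tendsto (fun n => -(g₂ n)) atTop (nhds 0) := by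
    simpa using hg₂0.neg
  exact tendsto_of_tendsto_of_tendsto_of_le_of_le hg₂0' hg₁0 hlb hub
end
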